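/- Let (λ_k)_{k≥1} satisfy λ_k > 0 for all k, set Λ_n = ∑_{k=1}^n λ_k, and suppose L = sup_{n≥1} (Λ_{n+1}/λ_{n+1} − Λ_n/λ_n) is finite. Then for every sequence (a_n)_{n≥1} of non-negative real numbers with ∑_{n=1}^∞ a_n convergent, one has ∑_{n=1}^∞ ∏_{k=1}^n a_k^{λ_k/Λ_n} ≤ e^L · ∑_{n=1}^∞ a_n. -/

import Mathlib

open Finset Real


/-- If `L = sup_n (Λ_{n+1}/λ_{n+1} - Λ_n/λ_n)` is finite, then the weighted
Carleman inequality holds with constant `e^L`. -/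
theorem weighted_carleman_of_L
    (lam : ℕ → ℝ) (hlam : ∀ k ≥ 1, 0 < lam k)
    (Lam : ℕ → ℝ) (hLam : ∀ n, Lam n = ∑ k ∈ Finset.Icc 1 n, lam k)
    (L : ℝ)
    (hL : IsLUB {x : ℝ | ∃ n ≥ 1,
        x = Lam (n + 1) / lam (n + 1) - Lam n / lam n} L)
    (a : ℕ → ℝ) (ha : ∀ n ≥ 1, 0 ≤ a n) (hsum : Summable (fun n : ℕ => a (n + 1))) :
    ∑' n : ℕ, ∏ k ∈ Finset.Icc 1 (n + 1), a k ^ (lam k / Lam (n + 1)) ≤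
      Real.exp L * ∑' n : ℕ, a (n + 1) := by
  -- Basic facts about Λ
  have hΛ0 : Lam 0 = 0 := by rw [hLam]; simp
  have hΛsucc : ∀ n : ℕ, Lam (n + 1) = Lam n + lam (n + 1) := by
    intro n
    rw [hLam, hLam, Finset.sum_Icc_succ_top (Nat.le_add_left 1 n)]
  have hΛnonneg : ∀ n, 0 ≤ Lam n := by
    intro n
    rw [hLam]
    exact Finset.sum_nonneg fun k hk => (hlam k (Finset.mem_Icc.mp hk).1).le
  have hΛpos : ∀ n ≥ 1, 0 < Lam n := by
    intro n hn
    obtain ⟨m, rfl⟩ := Nat.exists_eq_add_of_le hn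
    rw [Nat.add_comm, hΛsucc]
    exact add_pos_of_nonneg_of_pos (hΛnonneg m) (hlam (m + 1) (by omega))
  have hlam' : ∀ k : ℕ, 0 < lam (k + 1) := fun k => hlam (k + 1) (by omega)
  -- T n = Λ_n / λ_n
  set T : ℕ → ℝ := fun n => Lam n / lam n with hT
  have hTpos : ∀ n, 0 < T (n + 1) := fun n =>
    div_pos (hΛpos (n + 1) (by omega)) (hlam' n)
  have hlamT : ∀ n, lam (n + 1) * T (n + 1) = Lam (n + 1) := fun n => by
    rw [hT]; rw [mul_div_cancel₀ _ (ne_of_gt (hlam' n))]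
  have hTdiff : ∀ n ≥ 1, T (n + 1) - T n ≤ L := fun n hn => hL.1 ⟨n, hn, rfl⟩
  -- the auxiliary sequences
  set d : ℕ → ℝ := fun k => T (k + 1) ^ Lam k with hd
  have hd_pos : ∀ k, 0 < d k := fun k => Real.rpow_pos_of_pos (hTpos k) _
  have hd0 : d 0 = 1 := by rw [hd]; simp [hΛ0]
  set c : ℕ → ℝ := fun k => (d k / d (k - 1)) ^ (1 / lam k) with hc
  have hc_pos : ∀ k, 0 < c k := fun k =>
    Real.rpow_pos_of_pos (div_pos (hd_pos k) (hd_pos (k - 1))) _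
  have hck : ∀ j : ℕ, c (j + 1) ^ lam (j + 1) = d (j + 1) / d j := by
    intro j
    rw [hc]
    simp only [Nat.add_sub_cancel]
    rw [← Real.rpow_mul (div_pos (hd_pos (j + 1)) (hd_pos j)).le,
      one_div_mul_cancel (ne_of_gt (hlam' j)), Real.rpow_one]
  have hprod : ∀ m : ℕ, ∏ k ∈ Finset.Icc 1 m, c k ^ lam k = d m := by
    intro m
    induction m with
    | zero => simp [hd0]
    | succ n ih =>
      rw [Finset.prod_Icc_succ_top (Nat.le_add_left 1 n), ih, hck n, mul_comm,
        div_mul_cancel₀ _ (ne_of_gt (hd_pos n))]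
  -- the key bound : c (j+1) ≤ e^L * T (j+1)
  have hc_le : ∀ j : ℕ, c (j + 1) ≤ Real.exp L * T (j + 1) := by
    intro j
    have hTj := hTpos j
    have hΛj := hΛpos (j + 1) (by omega)
    have hlj := hlam' j
    -- step 1 : T (j+2) ≤ exp (L * lam (j+1) / Lam (j+1)) * T (j+1)
    have h1 : T (j + 2) ≤ Real.exp (L * lam (j + 1) / Lam (j + 1)) * T (j + 1) := by
      have hdiff : T (j + 2) - T (j + 1) ≤ L := hTdiff (j + 1) (by omega)
      have hexp : L * lam (j + 1) / Lam (j + 1) + 1 ≤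
          Real.exp (L * lam (j + 1) / Lam (j + 1)) := Real.add_one_le_exp _
      have key : L * lam (j + 1) / Lam (j + 1) * T (j + 1) = L := by
        rw [hT]
        field_simp
      calc T (j + 2) ≤ T (j + 1) + L := by linarith
        _ = (L * lam (j + 1) / Lam (j + 1) + 1) * T (j + 1) := by
            rw [add_mul, one_mul, key]; ring
        _ ≤ Real.exp (L * lam (j + 1) / Lam (j + 1)) * T (j + 1) :=
            mul_le_mul_of_nonneg_right hexp (hTpos j).le
    -- step 2 : d (j+1) ≤ exp (L * lam (j+1)) * T (j+1) ^ lam (j+1) * d j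
    have h2 : d (j + 1) ≤ (Real.exp L * T (j + 1)) ^ lam (j + 1) * d j := by
      have : d (j + 1) ≤ (Real.exp (L * lam (j + 1) / Lam (j + 1)) * T (j + 1)) ^ Lam (j + 1) :=
        Real.rpow_le_rpow (hTpos (j + 1)).le h1 (hΛnonneg _)
      refine this.trans_eq ?_
      rw [Real.mul_rpow (Real.exp_pos _).le (hTpos j).le,
        ← Real.exp_mul, div_mul_cancel₀ _ (ne_of_gt hΛj)]
      have hsplit : Lam (j + 1) = lam (j + 1) + Lam j := by rw [hΛsucc j]; ring
      rw [Real.mul_rpow (Real.exp_pos _).le (hTpos j).le, ← Real.exp_mul]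
      rw [hsplit, Real.rpow_add (hTpos j), hd]
      ring
    -- conclude
    have h3 : c (j + 1) ^ lam (j + 1) ≤ (Real.exp L * T (j + 1)) ^ lam (j + 1) := by
      rw [hck j, div_le_iff₀ (hd_pos j)]
      exact h2
    have h4 : (0:ℝ) < Real.exp L * T (j + 1) :=
      mul_pos (Real.exp_pos _) (hTpos j)
    by_contra hcon
    push_neg at hcon
    exact absurd h3 (not_le.mpr (Real.rpow_lt_rpow h4.le hcon hlj))
  set b : ℕ → ℝ := fun k => Real.exp L * (Lam k * a k) with hb
  have hb_nonneg : ∀ k, 0 ≤ b k := fun k => by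
    rw [hb]
    have := hΛnonneg k
    rcases Nat.eq_zero_or_pos k with hk | hk
    · subst hk; simp [hΛ0]
    · exact mul_nonneg (Real.exp_pos L).le (mul_nonneg this (ha k hk))
  -- the per-index AM-GM inequality
  have hGr : ∀ m ≥ 1, (∏ k ∈ Finset.Icc 1 m, a k ^ (lam k / Lam m)) ≤
      (1 / Lam m - 1 / Lam (m + 1)) * ∑ k ∈ Finset.Icc 1 m, b k := by
    intro m hm
    have hΛm := hΛpos m hm
    have amgm := Real.geom_mean_le_arith_mean_weighted (Finset.Icc 1 m)
      (fun k => lam k / Lam m) (fun k => c k * a k)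
      (fun k hk => div_nonneg (hlam k (Finset.mem_Icc.mp hk).1).le hΛm.le)
      (by rw [← Finset.sum_div, ← hLam, div_self (ne_of_gt hΛm)])
      (fun k hk => mul_nonneg (hc_pos k).le (ha k (Finset.mem_Icc.mp hk).1))
    -- identify the left side
    have hsplit : ∀ k ∈ Finset.Icc 1 m, (c k * a k) ^ (lam k / Lam m) =
        c k ^ (lam k / Lam m) * a k ^ (lam k / Lam m) := fun k hk =>
      Real.mul_rpow (hc_pos k).le (ha k (Finset.mem_Icc.mp hk).1)
    have hcprod : ∏ k ∈ Finset.Icc 1 m, c k ^ (lam k / Lam m) = T (m + 1) := by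
      have h1 : ∀ k ∈ Finset.Icc 1 m, c k ^ (lam k / Lam m) =
          (c k ^ lam k) ^ (1 / Lam m) := by
        intro k hk
        rw [← Real.rpow_mul (hc_pos k).le, mul_one_div]
      rw [Finset.prod_congr rfl h1,
        Real.finset_prod_rpow _ _ (fun k _ => (Real.rpow_pos_of_pos (hc_pos k) _).le) _,
        hprod m, hd]
      obtain ⟨n, rfl⟩ := Nat.exists_eq_add_of_le hm
      rw [← Real.rpow_mul (hTpos _).le, mul_one_div, div_self (ne_of_gt hΛm), Real.rpow_one]
    have hL1 : T (m + 1) * ∏ k ∈ Finset.Icc 1 m, a k ^ (lam k / Lam m) ≤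
        ∑ k ∈ Finset.Icc 1 m, lam k / Lam m * (c k * a k) := by
      calc T (m + 1) * ∏ k ∈ Finset.Icc 1 m, a k ^ (lam k / Lam m)
          = ∏ k ∈ Finset.Icc 1 m, (c k * a k) ^ (lam k / Lam m) := by
            rw [Finset.prod_congr rfl hsplit, Finset.prod_mul_distrib, hcprod]
        _ ≤ _ := amgm
    -- bound the right side
    have hR : ∑ k ∈ Finset.Icc 1 m, lam k / Lam m * (c k * a k) ≤
        (1 / Lam m) * ∑ k ∈ Finset.Icc 1 m, b k := by
      rw [Finset.mul_sum]
      refine Finset.sum_le_sum fun k hk => ?_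
      obtain ⟨j, rfl⟩ : ∃ j, k = j + 1 := by
        obtain ⟨i, hi⟩ := Nat.exists_eq_add_of_le (Finset.mem_Icc.mp hk).1
        exact ⟨i, by omega⟩
      have hak := ha (j + 1) (by omega)
      have h2 : lam (j + 1) * (c (j + 1) * a (j + 1)) ≤ b (j + 1) := by
        have h3 : c (j + 1) * (lam (j + 1) * a (j + 1)) ≤
            (Real.exp L * T (j + 1)) * (lam (j + 1) * a (j + 1)) :=
          mul_le_mul_of_nonneg_right (hc_le j) (mul_nonneg (hlam' j).le hak)
        calc lam (j + 1) * (c (j + 1) * a (j + 1))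
            = c (j + 1) * (lam (j + 1) * a (j + 1)) := by ring
          _ ≤ (Real.exp L * T (j + 1)) * (lam (j + 1) * a (j + 1)) := h3
          _ = Real.exp L * ((lam (j + 1) * T (j + 1)) * a (j + 1)) := by ring
          _ = b (j + 1) := by rw [hlamT j, hb]
      calc lam (j + 1) / Lam m * (c (j + 1) * a (j + 1))
          = 1 / Lam m * (lam (j + 1) * (c (j + 1) * a (j + 1))) := by ring
        _ ≤ 1 / Lam m * b (j + 1) :=
            mul_le_mul_of_nonneg_left h2 (by positivity)
    -- combine and divide by T (m+1)
    have hTm1 : 0 < T (m + 1) := hTpos m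
    have hmain : (∏ k ∈ Finset.Icc 1 m, a k ^ (lam k / Lam m)) ≤
        (1 / Lam m) * (∑ k ∈ Finset.Icc 1 m, b k) / T (m + 1) := by
      rw [le_div_iff₀ hTm1, mul_comm]
      exact hL1.trans hR
    refine hmain.trans_eq ?_
    have hne1 : Lam m ≠ 0 := ne_of_gt hΛm
    have hne2 : lam (m + 1) ≠ 0 := ne_of_gt (hlam' m)
    have hne3 : Lam (m + 1) ≠ 0 := ne_of_gt (hΛpos (m + 1) (by omega))
    have hr : 1 / Lam m / T (m + 1) = 1 / Lam m - 1 / Lam (m + 1) := by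
      rw [hT]
      have h4 : Lam (m + 1) = Lam m + lam (m + 1) := hΛsucc m
      have hne3' : Lam m + lam (m + 1) ≠ 0 := by rw [← h4]; exact hne3
      rw [h4]
      field_simp
      rw [h4]; ring
    calc 1 / Lam m * (∑ k ∈ Finset.Icc 1 m, b k) / T (m + 1)
        = (1 / Lam m / T (m + 1)) * ∑ k ∈ Finset.Icc 1 m, b k := by ring
      _ = (1 / Lam m - 1 / Lam (m + 1)) * ∑ k ∈ Finset.Icc 1 m, b k := by rw [hr]
  -- telescoping induction
  have claim : ∀ N : ℕ,
      (∑ m ∈ Finset.Icc 1 N, ∏ k ∈ Finset.Icc 1 m, a k ^ (lam k / Lam m)) +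
        (1 / Lam (N + 1)) * ∑ k ∈ Finset.Icc 1 N, b k ≤
      ∑ k ∈ Finset.Icc 1 N, Real.exp L * a k := by
    intro N
    induction N with
    | zero => simp
    | succ n ih =>
      have hB1 : ∑ k ∈ Finset.Icc 1 (n + 1), b k =
          (∑ k ∈ Finset.Icc 1 n, b k) + b (n + 1) :=
        Finset.sum_Icc_succ_top (Nat.le_add_left 1 n) _
      have hGstep := hGr (n + 1) (by omega)
      rw [Finset.sum_Icc_succ_top (Nat.le_add_left 1 n)
          (fun m => ∏ k ∈ Finset.Icc 1 m, a k ^ (lam k / Lam m)),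
        Finset.sum_Icc_succ_top (Nat.le_add_left 1 n) (fun k => Real.exp L * a k), hB1]
      have hb_eq : (1 / Lam (n + 1)) * b (n + 1) = Real.exp L * a (n + 1) := by
        rw [hb]
        have hne : Lam (n + 1) ≠ 0 := ne_of_gt (hΛpos (n + 1) (by omega))
        field_simp
      have hBn : 0 ≤ ∑ k ∈ Finset.Icc 1 n, b k :=
        Finset.sum_nonneg fun k _ => hb_nonneg k
      set S := ∑ m ∈ Finset.Icc 1 n, ∏ k ∈ Finset.Icc 1 m, a k ^ (lam k / Lam m) with hS
      set Bn := ∑ k ∈ Finset.Icc 1 n, b k with hBn'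
      set P := 1 / Lam (n + 1) with hP
      set Q := 1 / Lam (n + 2) with hQ
      have hkey : (P - Q) * (Bn + b (n + 1)) + Q * (Bn + b (n + 1)) =
          P * Bn + P * b (n + 1) := by ring
      rw [hB1] at hGstep
      linarith [hGstep, ih, hb_eq, hkey]
  -- final assembly
  have hanonneg : ∀ i : ℕ, 0 ≤ a (i + 1) := fun i => ha (i + 1) (by omega)
  have hreindex : ∀ (f : ℕ → ℝ) (N : ℕ),
      ∑ i ∈ Finset.range N, f (i + 1) = ∑ m ∈ Finset.Icc 1 N, f m := by
    intro f N
    induction N with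
    | zero => simp
    | succ n ih => rw [Finset.sum_range_succ, ih,
        Finset.sum_Icc_succ_top (Nat.le_add_left 1 n)]
  apply Real.tsum_le_of_sum_range_le
  · intro n
    exact Finset.prod_nonneg fun k hk =>
      Real.rpow_nonneg (ha k (Finset.mem_Icc.mp hk).1) _
  · intro N
    calc ∑ i ∈ Finset.range N, ∏ k ∈ Finset.Icc 1 (i + 1), a k ^ (lam k / Lam (i + 1))
        = ∑ m ∈ Finset.Icc 1 N, ∏ k ∈ Finset.Icc 1 m, a k ^ (lam k / Lam m) :=
          hreindex (fun m => ∏ k ∈ Finset.Icc 1 m, a k ^ (lam k / Lam m)) N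
      _ ≤ ∑ k ∈ Finset.Icc 1 N, Real.exp L * a k := by
          have h7 : 0 ≤ (1 / Lam (N + 1)) * ∑ k ∈ Finset.Icc 1 N, b k :=
            mul_nonneg (one_div_nonneg.mpr (hΛpos (N + 1) (by omega)).le) (Finset.sum_nonneg fun k _ => hb_nonneg k)
          linarith [claim N]
      _ = Real.exp L * ∑ i ∈ Finset.range N, a (i + 1) := by
          rw [← Finset.mul_sum, hreindex a N]
      _ ≤ Real.exp L * ∑' n : ℕ, a (n + 1) :=
          mul_le_mul_of_nonneg_left
            (hsum.sum_le_tsum (Finset.range N) (fun i _ => hanonneg i))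
            (Real.exp_pos L).le
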